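/- Let x : G → [0,1] be nonnegative fractions over a finite ordered item set G with total mass T = ∑_j x_j > 0, and let p = ⌈T⌉. Then there exist unique vectors g^1,…,g^p ∈ [0,1]^G such that: (1) |g^t|_1 = 1 for t < p and |g^p|_1 = T − (p−1); (2) ∑_{t=1}^p g^t_j = x_j for all j; (3) for all t < t' and items j before j' in the order, it is not the case that g^t_{j'} > 0 and g^{t'}_j > 0. -/
import Mathlib


open Finset

private lemma clamp_diff (a b u v : ℝ) (hab : a ≤ b) (huv : u ≤ v) :
    min (max v a) b - min (max u a) b = max 0 (min b v - max a u) := by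
  simp only [min_def, max_def]
  split_ifs <;> linarith

private lemma split_sum {G : Type*} [Fintype G] [LinearOrder G] (j : G) (C : G → ℝ) :
    ∑ k, C k = (∑ k ∈ univ.filter (· < j), C k) + C j
      + ∑ k ∈ univ.filter (j < ·), C k := by
  classical
  have h1 : (univ : Finset G).filter (fun k => ¬ k < j)
      = insert j ((univ : Finset G).filter (j < ·)) := by
    ext k
    simp only [mem_filter, mem_insert, mem_univ, true_and, not_lt]
    constructor
    · intro h; rcases eq_or_lt_of_le h with h | h
      · exact Or.inl h.symm
      · exact Or.inr h
    · rintro (rfl | h) <;> [exact le_refl _; exact le_of_lt h]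
  have h2 := Finset.sum_filter_add_sum_filter_not (univ : Finset G) (· < j) C
  rw [h1, Finset.sum_insert (by simp)] at h2
  linarith [h2]

private lemma greedy_lt {G : Type*} [Fintype G] [LinearOrder G]
    (x A B : G → ℝ) (j : G)
    (hB0 : ∀ k, 0 ≤ B k) (hBx : ∀ k, B k ≤ x k)
    (hA0 : ∀ k, 0 ≤ A k)
    (hAth : ∀ k k', k < k' → 0 < A k' → A k = x k)
    (heq : ∀ i, i < j → A i = B i) (hj : A j < B j) :
    ∑ k, A k < ∑ k, B k := by
  classical
  have hAj : A j < x j := lt_of_lt_of_le hj (hBx j)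
  have hAzero : ∀ k, j < k → A k = 0 := by
    intro k hk
    by_contra h
    exact absurd (hAth j k hk (lt_of_le_of_ne (hA0 k) (Ne.symm h))) (ne_of_lt hAj)
  rw [split_sum j A, split_sum j B]
  have e1 : ∑ k ∈ univ.filter (· < j), A k = ∑ k ∈ univ.filter (· < j), B k :=
    Finset.sum_congr rfl (fun k hk => heq k (by simpa using hk))
  have e2 : ∑ k ∈ univ.filter (j < ·), A k = 0 :=
    Finset.sum_eq_zero (fun k hk => hAzero k (by simpa using hk))
  have e3 : (0:ℝ) ≤ ∑ k ∈ univ.filter (j < ·), B k :=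
    Finset.sum_nonneg (fun k _ => hB0 k)
  linarith

private lemma greedy_unique {G : Type*} [Fintype G] [LinearOrder G]
    (x A B : G → ℝ)
    (hA0 : ∀ k, 0 ≤ A k) (hAx : ∀ k, A k ≤ x k)
    (hB0 : ∀ k, 0 ≤ B k) (hBx : ∀ k, B k ≤ x k)
    (hsum : ∑ k, A k = ∑ k, B k)
    (hAth : ∀ k k', k < k' → 0 < A k' → A k = x k)
    (hBth : ∀ k k', k < k' → 0 < B k' → B k = x k) :
    A = B := by
  classical
  by_contra hne
  have hs : ((univ : Finset G).filter (fun j => A j ≠ B j)).Nonempty := by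
    rcases Function.ne_iff.mp hne with ⟨j, hj⟩
    exact ⟨j, by simp [hj]⟩
  set j := ((univ : Finset G).filter (fun j => A j ≠ B j)).min' hs with hjdef
  have hjmem := Finset.min'_mem _ hs
  have hjne : A j ≠ B j := by simpa using hjmem
  have heq : ∀ i, i < j → A i = B i := by
    intro i hi
    by_contra h
    exact absurd (lt_of_lt_of_le hi (Finset.min'_le _ i (by simp [h]))) (lt_irrefl i)
  rcases lt_or_gt_of_ne hjne with h | h
  · exact absurd hsum (ne_of_lt (greedy_lt x A B j hB0 hBx hA0 hAth heq h))
  · exact absurd hsum.symm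
      (ne_of_lt (greedy_lt x B A j hA0 hAx hB0 hBth (fun i hi => (heq i hi).symm) h))

/-- The Shmoys–Tardos group decomposition: fractions `x : G → [0,1]` over a
linearly ordered finite item set with total mass `T > 0` decompose uniquely
into `p = ⌈T⌉` groups `g^1, …, g^p` satisfying (P1), (P2), (P3). -/
theorem group_decomposition {G : Type*} [Fintype G] [LinearOrder G]
    (x : G → ℝ) (hx0 : ∀ j, 0 ≤ x j) (hx1 : ∀ j, x j ≤ 1)
    (T : ℝ) (hT : T = ∑ j, x j) (hTpos : 0 < T) (p : ℕ) (hp : p = ⌈T⌉₊) :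
    ∃! g : Fin p → G → ℝ,
      (∀ t j, 0 ≤ g t j ∧ g t j ≤ 1) ∧
      -- (P1)
      (∀ t : Fin p, (t : ℕ) + 1 < p → ∑ j, g t j = 1) ∧
      (∀ t : Fin p, (t : ℕ) + 1 = p → ∑ j, g t j = T - ((p : ℝ) - 1)) ∧
      -- (P2)
      (∀ j, ∑ t, g t j = x j) ∧
      -- (P3)
      (∀ t t' : Fin p, t < t' → ∀ j j' : G, j < j' →
        ¬(0 < g t j' ∧ 0 < g t' j)) := by
  classical
  have hTp : T ≤ (p : ℝ) := by rw [hp]; exact Nat.le_ceil T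
  have hpT : (p : ℝ) - 1 < T := by
    have h := Nat.ceil_lt_add_one (le_of_lt hTpos)
    rw [hp]; linarith
  set S : G → ℝ := fun j => ∑ k ∈ univ.filter (· < j), x k with hSdef
  have hS0 : ∀ j, 0 ≤ S j := fun j => Finset.sum_nonneg fun k _ => hx0 k
  have hSins : ∀ j : G, S j + x j = ∑ k ∈ insert j (univ.filter (· < j)), x k := by
    intro j
    rw [Finset.sum_insert (by simp)]
    ring
  have hSx : ∀ j, S j + x j ≤ T := by
    intro j
    rw [hSins, hT]
    exact Finset.sum_le_sum_of_subset_of_nonneg (subset_univ _) (fun k _ _ => hx0 k)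
  have hSmono : ∀ j j' : G, j < j' → S j + x j ≤ S j' := by
    intro j j' hjj
    rw [hSins]
    refine Finset.sum_le_sum_of_subset_of_nonneg ?_ (fun k _ _ => hx0 k)
    intro k hk
    simp only [mem_insert, mem_filter, mem_univ, true_and] at hk ⊢
    rcases hk with rfl | hk
    · exact hjj
    · exact hk.trans hjj
  set g : Fin p → G → ℝ :=
    fun t j => max 0 (min (S j + x j) ((t : ℝ) + 1) - max (S j) (t : ℝ)) with hgdef
  -- order isomorphism with Fin n
  set n : ℕ := Fintype.card G with hn
  set e : Fin n ≃o G := monoEquivOfFin G rfl with he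
  set xe : ℕ → ℝ := fun i => if h : i < n then x (e ⟨i, h⟩) else 0 with hxedef
  set c : ℕ → ℝ := fun k => ∑ i ∈ range k, xe i with hcdef
  have hxe : ∀ i : Fin n, xe (i : ℕ) = x (e i) := by
    intro i
    simp only [hxedef, dif_pos i.isLt]
  have hcsucc : ∀ i : Fin n, c ((i : ℕ) + 1) = c (i : ℕ) + x (e i) := by
    intro i
    simp only [hcdef, Finset.sum_range_succ, hxe i]
  have hcn : c n = T := by
    rw [hT]
    show ∑ i ∈ range n, xe i = ∑ j, x j
    rw [← Fin.sum_univ_eq_sum_range xe n]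
    rw [Finset.sum_congr rfl (fun i _ => hxe i)]
    exact Equiv.sum_comp e.toEquiv x
  have hce : ∀ i : Fin n, S (e i) = c (i : ℕ) := by
    intro i
    have h1 : S (e i) = ∑ m : Fin n, if m < i then x (e m) else 0 := by
      rw [hSdef]
      dsimp only
      rw [← Finset.sum_filter]
      refine (Finset.sum_equiv e.toEquiv ?_ ?_).symm
      · intro m; simp [e.lt_iff_lt]
      · intro m _; rfl
    have h2 : c (i : ℕ) = ∑ m : Fin n, if (m : ℕ) < (i : ℕ) then xe (m : ℕ) else 0 := by
      show ∑ m ∈ range (i : ℕ), xe m = _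
      have hr : range (i : ℕ) = (range n).filter (· < (i : ℕ)) := by
        ext m
        simp only [mem_range, mem_filter]
        constructor
        · intro h; exact ⟨h.trans i.isLt, h⟩
        · intro h; exact h.2
      rw [hr, Finset.sum_filter, ← Fin.sum_univ_eq_sum_range (fun m => if m < (i : ℕ) then xe m else 0) n]
    rw [h1, h2]
    refine Finset.sum_congr rfl fun m _ => ?_
    rw [hxe m]
    by_cases hmi : m < i
    · rw [if_pos hmi, if_pos (Fin.lt_iff_val_lt_val.mp hmi)]
    · rw [if_neg hmi, if_neg (fun h => hmi (Fin.lt_iff_val_lt_val.mpr h))]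
  -- row sums
  have hsumrow : ∀ t : Fin p, ∑ j, g t j = min T ((t : ℝ) + 1) - (t : ℝ) := by
    intro t
    have htT : (t : ℝ) ≤ (p : ℝ) - 1 := by
      have h1 : (t : ℕ) + 1 ≤ p := t.isLt
      have h2 : ((t : ℕ) : ℝ) + 1 ≤ (p : ℝ) := by exact_mod_cast h1
      linarith
    have hgF : ∀ i : Fin n, g t (e i) =
        min (max (c ((i : ℕ) + 1)) (t : ℝ)) ((t : ℝ) + 1)
        - min (max (c (i : ℕ)) (t : ℝ)) ((t : ℝ) + 1) := by
      intro i
      have h := clamp_diff (t : ℝ) ((t : ℝ) + 1) (S (e i)) (S (e i) + x (e i))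
        (by linarith) (by linarith [hx0 (e i)])
      rw [min_comm ((t : ℝ) + 1), max_comm (t : ℝ)] at h
      rw [hcsucc i, ← hce i]
      show max 0 (min (S (e i) + x (e i)) ((t : ℝ) + 1) - max (S (e i)) (t : ℝ)) = _
      exact h.symm
    calc ∑ j, g t j = ∑ i : Fin n, g t (e i) := (Equiv.sum_comp e.toEquiv _).symm
      _ = ∑ i : Fin n, (min (max (c ((i : ℕ) + 1)) (t : ℝ)) ((t : ℝ) + 1)
            - min (max (c (i : ℕ)) (t : ℝ)) ((t : ℝ) + 1)) :=
          Finset.sum_congr rfl (fun i _ => hgF i)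
      _ = ∑ i ∈ range n, (min (max (c (i + 1)) (t : ℝ)) ((t : ℝ) + 1)
            - min (max (c i) (t : ℝ)) ((t : ℝ) + 1)) :=
          Fin.sum_univ_eq_sum_range
            (fun k => min (max (c (k + 1)) (t : ℝ)) ((t : ℝ) + 1)
              - min (max (c k) (t : ℝ)) ((t : ℝ) + 1)) n
      _ = min (max (c n) (t : ℝ)) ((t : ℝ) + 1) - min (max (c 0) (t : ℝ)) ((t : ℝ) + 1) :=
          Finset.sum_range_sub (fun k => min (max (c k) (t : ℝ)) ((t : ℝ) + 1)) n
      _ = min T ((t : ℝ) + 1) - (t : ℝ) := by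
          rw [hcn]
          have hc0 : c 0 = 0 := by simp [hcdef]
          rw [hc0]
          rw [max_eq_left (by linarith : (t : ℝ) ≤ T)]
          rw [max_eq_right (by positivity : (0 : ℝ) ≤ (t : ℝ))]
          rw [min_eq_left (by linarith : (t : ℝ) ≤ (t : ℝ) + 1)]
  have hbounds : ∀ (t : Fin p) (j : G), 0 ≤ g t j ∧ g t j ≤ 1 := by
    intro t j
    refine ⟨le_max_left _ _, ?_⟩
    show max 0 (min (S j + x j) ((t : ℝ) + 1) - max (S j) (t : ℝ)) ≤ 1
    apply max_le (by norm_num)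
    have h1 : min (S j + x j) ((t : ℝ) + 1) ≤ (t : ℝ) + 1 := min_le_right _ _
    have h2 : (t : ℝ) ≤ max (S j) (t : ℝ) := le_max_right _ _
    linarith
  have hP1 : ∀ t : Fin p, (t : ℕ) + 1 < p → ∑ j, g t j = 1 := by
    intro t ht
    rw [hsumrow t]
    have h1 : ((t : ℕ) : ℝ) + 2 ≤ (p : ℝ) := by exact_mod_cast Nat.succ_le_of_lt ht
    rw [min_eq_right (by linarith : ((t : ℕ) : ℝ) + 1 ≤ T)]
    ring
  have hP1' : ∀ t : Fin p, (t : ℕ) + 1 = p → ∑ j, g t j = T - ((p : ℝ) - 1) := by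
    intro t ht
    rw [hsumrow t]
    have h1 : ((t : ℕ) : ℝ) + 1 = (p : ℝ) := by exact_mod_cast ht
    rw [min_eq_left (by linarith : T ≤ ((t : ℕ) : ℝ) + 1)]
    linarith
  have hP2 : ∀ j, ∑ t, g t j = x j := by
    intro j
    have hgF : ∀ t : Fin p, g t j =
        min (max (((t : ℕ) : ℝ) + 1) (S j)) (S j + x j)
        - min (max (((t : ℕ) : ℝ)) (S j)) (S j + x j) := by
      intro t
      have h := clamp_diff (S j) (S j + x j) ((t : ℝ)) ((t : ℝ) + 1)
        (by linarith [hx0 j]) (by linarith)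
      show max 0 (min (S j + x j) ((t : ℝ) + 1) - max (S j) ((t : ℝ))) = _
      exact h.symm
    calc ∑ t : Fin p, g t j
        = ∑ t : Fin p, (min (max (((t : ℕ) : ℝ) + 1) (S j)) (S j + x j)
            - min (max (((t : ℕ) : ℝ)) (S j)) (S j + x j)) :=
          Finset.sum_congr rfl (fun t _ => hgF t)
      _ = ∑ k ∈ range p, (min (max ((k : ℝ) + 1) (S j)) (S j + x j)
            - min (max ((k : ℝ)) (S j)) (S j + x j)) :=
          Fin.sum_univ_eq_sum_range (fun k => min (max ((k : ℝ) + 1) (S j)) (S j + x j)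
            - min (max ((k : ℝ)) (S j)) (S j + x j)) p
      _ = min (max ((p : ℝ)) (S j)) (S j + x j) - min (max (0 : ℝ) (S j)) (S j + x j) := by
          have h := Finset.sum_range_sub (fun k : ℕ => min (max ((k : ℝ)) (S j)) (S j + x j)) p
          push_cast at h
          exact h
      _ = x j := by
          have hSp : S j ≤ (p : ℝ) := by linarith [hSx j, hx0 j]
          rw [max_eq_left hSp, min_eq_right (by linarith [hSx j] : S j + x j ≤ (p : ℝ))]
          rw [max_eq_right (hS0 j), min_eq_left (by linarith [hx0 j] : S j ≤ S j + x j)]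
          ring
  have hP3 : ∀ t t' : Fin p, t < t' → ∀ j j' : G, j < j' → ¬(0 < g t j' ∧ 0 < g t' j) := by
    rintro t t' htt j j' hjj ⟨h1, h2⟩
    have h1' : (0 : ℝ) < max 0 (min (S j' + x j') ((t : ℝ) + 1) - max (S j') (t : ℝ)) := h1
    have h2' : (0 : ℝ) < max 0 (min (S j + x j) ((t' : ℝ) + 1) - max (S j) (t' : ℝ)) := h2
    have d1 : 0 < min (S j' + x j') ((t : ℝ) + 1) - max (S j') (t : ℝ) := by
      rcases lt_max_iff.mp h1' with h | h
      · exact absurd h (lt_irrefl 0)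
      · exact h
    have d2 : 0 < min (S j + x j) ((t' : ℝ) + 1) - max (S j) (t' : ℝ) := by
      rcases lt_max_iff.mp h2' with h | h
      · exact absurd h (lt_irrefl 0)
      · exact h
    have e1 : S j' < (t : ℝ) + 1 := by
      linarith [le_max_left (S j') ((t : ℝ)), min_le_right (S j' + x j') ((t : ℝ) + 1)]
    have e2 : (t' : ℝ) < S j + x j := by
      linarith [le_max_right (S j) ((t' : ℝ)), min_le_left (S j + x j) ((t' : ℝ) + 1)]
    have e3 := hSmono j j' hjj
    have hcast : ((t' : ℕ) : ℝ) < ((t : ℕ) : ℝ) + 1 := by linarith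
    have hlt : (t' : ℕ) < (t : ℕ) + 1 := by exact_mod_cast hcast
    have := Fin.lt_iff_val_lt_val.mp htt
    omega
  have keyuniq : ∀ g1 g2 : Fin p → G → ℝ,
      ((∀ t j, 0 ≤ g1 t j ∧ g1 t j ≤ 1) ∧
       (∀ t : Fin p, (t : ℕ) + 1 < p → ∑ j, g1 t j = 1) ∧
       (∀ t : Fin p, (t : ℕ) + 1 = p → ∑ j, g1 t j = T - ((p : ℝ) - 1)) ∧
       (∀ j, ∑ t, g1 t j = x j) ∧
       (∀ t t' : Fin p, t < t' → ∀ j j' : G, j < j' → ¬(0 < g1 t j' ∧ 0 < g1 t' j))) →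
      ((∀ t j, 0 ≤ g2 t j ∧ g2 t j ≤ 1) ∧
       (∀ t : Fin p, (t : ℕ) + 1 < p → ∑ j, g2 t j = 1) ∧
       (∀ t : Fin p, (t : ℕ) + 1 = p → ∑ j, g2 t j = T - ((p : ℝ) - 1)) ∧
       (∀ j, ∑ t, g2 t j = x j) ∧
       (∀ t t' : Fin p, t < t' → ∀ j j' : G, j < j' → ¬(0 < g2 t j' ∧ 0 < g2 t' j))) →
      g1 = g2 := by
    rintro g1 g2 ⟨h1b, h1P1, h1P1', h1P2, h1P3⟩ ⟨h2b, h2P1, h2P1', h2P2, h2P3⟩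
    have hcol : ∀ t : Fin p, ∑ j, g1 t j = ∑ j, g2 t j := by
      intro t
      rcases lt_or_eq_of_le (Nat.succ_le_of_lt t.isLt) with h | h
      · rw [h1P1 t h, h2P1 t h]
      · rw [h1P1' t h, h2P1' t h]
    -- cumulative sums agree
    have hcum0 : ∀ (y : Fin p → G → ℝ),
        (∀ t j, 0 ≤ y t j ∧ y t j ≤ 1) → (∀ j, ∑ t, y t j = x j) →
        (∀ t t' : Fin p, t < t' → ∀ j j' : G, j < j' → ¬(0 < y t j' ∧ 0 < y t' j)) →
        ∀ t : Fin p,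
          (∀ j, 0 ≤ ∑ t' ∈ univ.filter (· ≤ t), y t' j) ∧
          (∀ j, ∑ t' ∈ univ.filter (· ≤ t), y t' j ≤ x j) ∧
          (∀ k k' : G, k < k' → 0 < ∑ t' ∈ univ.filter (· ≤ t), y t' k' →
            ∑ t' ∈ univ.filter (· ≤ t), y t' k = x k) := by
      intro y hb hP2y hP3y t
      have hle : ∀ j, ∑ t' ∈ univ.filter (· ≤ t), y t' j ≤ x j := by
        intro j
        rw [← hP2y j]
        exact Finset.sum_le_sum_of_subset_of_nonneg (Finset.filter_subset _ _)
          (fun k _ _ => (hb k j).1)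
      refine ⟨fun j => Finset.sum_nonneg (fun k _ => (hb k j).1), hle, ?_⟩
      intro k k' hkk hpos
      by_contra hne
      have hlt : ∑ t' ∈ univ.filter (· ≤ t), y t' k < x k :=
        lt_of_le_of_ne (hle k) hne
      -- exists t'' ≤ t with y t'' k' > 0
      obtain ⟨t2, ht2mem, ht2⟩ := Finset.exists_ne_zero_of_sum_ne_zero (ne_of_gt hpos)
      have ht2le : t2 ≤ t := by simpa using ht2mem
      have ht2pos : 0 < y t2 k' := lt_of_le_of_ne ((hb t2 k').1) (Ne.symm ht2)
      -- exists t1 > t with y t1 k > 0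
      have hsplit := Finset.sum_filter_add_sum_filter_not
        (univ : Finset (Fin p)) (· ≤ t) (fun t' => y t' k)
      rw [hP2y k] at hsplit
      have hpos2 : 0 < ∑ t' ∈ univ.filter (fun t' => ¬ t' ≤ t), y t' k := by linarith
      obtain ⟨t1, ht1mem, ht1⟩ := Finset.exists_ne_zero_of_sum_ne_zero (ne_of_gt hpos2)
      have ht1gt : t < t1 := by
        simp only [mem_filter, mem_univ, true_and, not_le] at ht1mem
        exact ht1mem
      have ht1pos : 0 < y t1 k := lt_of_le_of_ne ((hb t1 k).1) (Ne.symm ht1)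
      exact hP3y t2 t1 (lt_of_le_of_lt ht2le ht1gt) k k' hkk ⟨ht2pos, ht1pos⟩
    have hcum : ∀ t : Fin p, ∀ j : G,
        ∑ t' ∈ univ.filter (· ≤ t), g1 t' j = ∑ t' ∈ univ.filter (· ≤ t), g2 t' j := by
      intro t
      obtain ⟨hA0, hAx, hAth⟩ := hcum0 g1 h1b h1P2 h1P3 t
      obtain ⟨hB0, hBx, hBth⟩ := hcum0 g2 h2b h2P2 h2P3 t
      have hsum : ∑ j, ∑ t' ∈ univ.filter (· ≤ t), g1 t' j
          = ∑ j, ∑ t' ∈ univ.filter (· ≤ t), g2 t' j := by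
        rw [Finset.sum_comm, Finset.sum_comm (s := univ) (t := univ.filter (· ≤ t))]
        exact Finset.sum_congr rfl (fun t' _ => hcol t')
      have := greedy_unique x
        (fun j => ∑ t' ∈ univ.filter (· ≤ t), g1 t' j)
        (fun j => ∑ t' ∈ univ.filter (· ≤ t), g2 t' j)
        hA0 hAx hB0 hBx hsum hAth hBth
      exact fun j => congrFun this j
    have main : ∀ m : ℕ, ∀ t : Fin p, (t : ℕ) = m → ∀ j, g1 t j = g2 t j := by
      intro m
      induction m using Nat.strong_induction_on with
      | _ m ih =>
        intro t htm j
        have hsplit : (univ.filter (· ≤ t) : Finset (Fin p))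
            = insert t (univ.filter (· < t)) := by
          ext t'
          simp only [mem_filter, mem_univ, true_and, mem_insert]
          constructor
          · intro h; rcases lt_or_eq_of_le h with h | h
            · exact Or.inr h
            · exact Or.inl h
          · rintro (rfl | h)
            · exact le_refl _
            · exact le_of_lt h
        have hA := hcum t j
        rw [hsplit, Finset.sum_insert (by simp), Finset.sum_insert (by simp)] at hA
        have hlt : ∑ t' ∈ univ.filter (· < t), g1 t' j
            = ∑ t' ∈ univ.filter (· < t), g2 t' j := by
          refine Finset.sum_congr rfl fun t' ht' => ?_
          have h1 : t' < t := by simpa using ht'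
          exact ih (t' : ℕ) (htm ▸ Fin.lt_iff_val_lt_val.mp h1) t' rfl j
        linarith
    funext t j
    exact main (t : ℕ) t rfl j
  refine ⟨g, ⟨hbounds, hP1, hP1', hP2, hP3⟩, fun y hy =>
    keyuniq y g hy ⟨hbounds, hP1, hP1', hP2, hP3⟩⟩
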